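/- For every x > 0, lim_{p→1} f_p(x) = (x−1)/log x, where f_p(x) = (1/(p p̃)) (x−1)²/((x^{1/p}−1)(x^{1/p̃}−1)) with 1/p + 1/p̃ = 1. Thus the WYD functions converge pointwise to the BKM function f₁(x) = (x−1)/log x as p → 1. -/

import Mathlib

open Real Filter Topology

/-- The Wigner–Yanase–Dyson generating function `f_p`. -/
noncomputable def fWYD (p pt x : ℝ) : ℝ :=
  (1 / (p * pt)) * (x - 1) ^ 2 / ((x ^ (1 / p) - 1) * (x ^ (1 / pt) - 1))

lemma slope_lim {x : ℝ} (hx : 0 < x) :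
    Tendsto (fun t : ℝ => (x ^ t - 1) / t) (𝓝[≠] (0 : ℝ)) (𝓝 (Real.log x)) := by
  have h : HasDerivAt (fun t : ℝ => x ^ t) (Real.log x) 0 := by
    simpa using (Real.hasStrictDerivAt_const_rpow hx 0).hasDerivAt
  have := hasDerivAt_iff_tendsto_slope.mp h
  refine this.congr fun t => ?_
  simp [slope_def_field, div_eq_inv_mul]

/-- `lim_{p→1} f_p(x) = (x−1)/log x` for every `x > 0` (here `p̃ = p/(p−1)`). -/
theorem fWYD_tendsto_BKM (x : ℝ) (hx : 0 < x) :
    Tendsto (fun p : ℝ => fWYD p (p / (p - 1)) x) (𝓝[≠] (1 : ℝ))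
      (𝓝 ((x - 1) / Real.log x)) := by
  rcases eq_or_ne x 1 with rfl | hx1
  · simp [fWYD]
  have hlog : Real.log x ≠ 0 := Real.log_ne_zero_of_pos_of_ne_one hx hx1
  have hxm1 : x - 1 ≠ 0 := sub_ne_zero.mpr hx1
  -- eventually p ≠ 0 and p ≠ 1
  have hev : ∀ᶠ p : ℝ in 𝓝[≠] (1 : ℝ), p ≠ 0 ∧ p ≠ 1 := by
    filter_upwards [self_mem_nhdsWithin,
      nhdsWithin_le_nhds (eventually_ne_nhds (by norm_num : (1:ℝ) ≠ 0))] with p h1 h0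
    exact ⟨h0, h1⟩
  -- first factor
  have hA : Tendsto (fun p : ℝ => (1 / p) * (x - 1) ^ 2 / (x ^ (1 / p) - 1))
      (𝓝[≠] (1 : ℝ)) (𝓝 (x - 1)) := by
    have hc : ContinuousAt (fun p : ℝ => (1 / p) * (x - 1) ^ 2 / (x ^ (1 / p) - 1)) 1 := by
      have : ContinuousAt (fun p : ℝ => x ^ (1 / p)) 1 :=
        (Real.continuousAt_const_rpow hx.ne').comp (by fun_prop (disch := norm_num))
      apply ContinuousAt.div
      · fun_prop (disch := norm_num)
      · exact this.sub continuousAt_const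
      · simpa using hxm1
    have h2 : Tendsto (fun p : ℝ => (1 / p) * (x - 1) ^ 2 / (x ^ (1 / p) - 1))
        (𝓝[≠] (1 : ℝ)) (𝓝 ((1 / 1) * (x - 1) ^ 2 / (x ^ (1 / (1:ℝ)) - 1))) :=
      hc.tendsto.mono_left nhdsWithin_le_nhds
    simpa [sq, hxm1, mul_div_assoc, mul_div_cancel_right₀] using h2
  -- second factor
  have ht : Tendsto (fun p : ℝ => (p - 1) / p) (𝓝[≠] (1 : ℝ)) (𝓝[≠] (0 : ℝ)) := by
    rw [tendsto_nhdsWithin_iff]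
    constructor
    · have : ContinuousAt (fun p : ℝ => (p - 1) / p) 1 := by
        fun_prop (disch := norm_num)
      have h2 : Tendsto (fun p : ℝ => (p - 1) / p) (𝓝[≠] (1 : ℝ)) (𝓝 ((1 - 1) / (1:ℝ))) :=
        this.tendsto.mono_left nhdsWithin_le_nhds
      simpa using h2
    · filter_upwards [hev] with p ⟨h0, h1⟩
      simp [div_ne_zero (sub_ne_zero.mpr h1) h0]
  have hB : Tendsto (fun p : ℝ => ((p - 1) / p) / (x ^ ((p - 1) / p) - 1))
      (𝓝[≠] (1 : ℝ)) (𝓝 (1 / Real.log x)) := by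
    have := ((slope_lim hx).inv₀ hlog).comp ht
    simpa [Function.comp_def, inv_div, one_div] using this
  have := hA.mul hB
  rw [show (x - 1) * (1 / Real.log x) = (x - 1) / Real.log x by ring] at this
  refine this.congr' ?_
  filter_upwards [hev] with p ⟨h0, h1⟩
  unfold fWYD
  rw [one_div_div]
  have h1' : p - 1 ≠ 0 := sub_ne_zero.mpr h1
  have hx1p : x ^ (1 / p) - 1 ≠ 0 ∨ True := Or.inr trivial
  field_simp
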